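/- Let Γ be a connected directed graph without self-loops with m edges and n ≥ 2 vertices, and let ρ̂ be its m×(n−1) reduced incidence matrix. Then there is a constant c_Γ > 0 depending only on Γ (one may take c_Γ = m · max_{e,e'} |(ρ̂ρ̂ᵀ)_{ee'}|) such that for every vector t̃ = (t̃_e) of positive reals, the matrix A(t̃) = ρ̂ᵀ diag(t̃) ρ̂ is invertible and, in the Loewner order, A(t̃)^{−1} (ρ̂ᵀ diag(t̃²) ρ̂) A(t̃)^{−1} ≥ (1/c_Γ) · Id, where diag(t̃²) is the diagonal matrix with entries t̃_e². -/

import Mathlib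

open Matrix MeasureTheory
open scoped BigOperators Classical

/-- A directed graph with `n + 1` vertices (indexed by `Fin (n + 1)`) and `m` edges
(indexed by `Fin m`), given by head and tail maps and having no self-loops. -/
structure DGraph (n m : ℕ) where
  head : Fin m → Fin (n + 1)
  tail : Fin m → Fin (n + 1)
  no_self_loop : ∀ e, head e ≠ tail e

namespace DGraph

variable {n m : ℕ}

/-- The incidence matrix: `ρ e i = 1` if `head e = i`, `-1` if `tail e = i`, `0` otherwise. -/
def inc (G : DGraph n m) : Matrix (Fin m) (Fin (n + 1)) ℝ := fun e i =>
  if G.head e = i then 1 else if G.tail e = i then -1 else 0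

/-- The underlying undirected (simple) adjacency graph determined by a set of edges. -/
def adjGraph (G : DGraph n m) (S : Set (Fin m)) : SimpleGraph (Fin (n + 1)) :=
  SimpleGraph.fromRel (fun i j => ∃ e ∈ S, G.head e = i ∧ G.tail e = j)

/-- Connectedness of the underlying undirected multigraph. -/
def Conn (G : DGraph n m) : Prop := (G.adjGraph Set.univ).Connected

/-- A spanning tree: a set of `n` edges (one fewer than the number `n + 1` of vertices)
whose edges connect all the vertices. -/
def IsSpanningTree (G : DGraph n m) (T : Finset (Fin m)) : Prop :=
  T.card = n ∧ (G.adjGraph (T : Set (Fin m))).Connected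

/-- The weighted Laplacian `M_Γ(t)_{ij} = ∑_e ρ^e_i (1/t_e) ρ^e_j` over the first `n`
vertices (the last vertex deleted). -/
noncomputable def lap (G : DGraph n m) (t : Fin m → ℝ) : Matrix (Fin n) (Fin n) ℝ :=
  fun i j => ∑ e, G.inc e i.castSucc * (1 / t e) * G.inc e j.castSucc

/-- The reduced incidence matrix: delete the column of the last vertex. -/
def redInc (G : DGraph n m) : Matrix (Fin m) (Fin n) ℝ := fun e i => G.inc e i.castSucc

end DGraph

section Aux


variable {n m : ℕ}

/-- Quadratic-form expansion for `ρᵀ * diagonal d * ρ`. -/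
lemma quadform_expand (ρ : Matrix (Fin m) (Fin n) ℝ) (d : Fin m → ℝ) (x y : Fin n → ℝ) :
    x ⬝ᵥ ((ρᵀ * Matrix.diagonal d * ρ) *ᵥ y) = ∑ e, d e * ((ρ *ᵥ x) e * (ρ *ᵥ y) e) := by
  rw [← Matrix.mulVec_mulVec, ← Matrix.mulVec_mulVec, Matrix.dotProduct_mulVec,
    Matrix.vecMul_transpose]
  simp [dotProduct, Matrix.mulVec_diagonal]
  exact Finset.sum_congr rfl fun e _ => by ring

lemma inc_dot (G : DGraph n m) (e : Fin m) (w : Fin (n+1) → ℝ) :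
    ∑ i, G.inc e i * w i = w (G.head e) - w (G.tail e) := by
  have h : ∀ i, G.inc e i * w i =
      (if G.head e = i then w i else 0) - (if G.tail e = i then w i else 0) := by
    intro i
    unfold DGraph.inc
    by_cases h1 : G.head e = i
    · have h2 : ¬ G.tail e = i := fun h2 => G.no_self_loop e (h1.trans h2.symm)
      simp [h1, h2]
    · by_cases h2 : G.tail e = i <;> simp [h1, h2]
  simp_rw [h, Finset.sum_sub_distrib, Finset.sum_ite_eq, Finset.mem_univ, if_true]

lemma redInc_mulVec (G : DGraph n m) (v : Fin n → ℝ) (e : Fin m) :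
    (G.redInc *ᵥ v) e = (Fin.snoc v 0 : Fin (n+1) → ℝ) (G.head e) - (Fin.snoc v 0 : Fin (n+1) → ℝ) (G.tail e) := by
  rw [← inc_dot G e (Fin.snoc v 0), Fin.sum_univ_castSucc]
  simp [Matrix.mulVec, dotProduct, DGraph.redInc]

/-- Injectivity of the reduced incidence matrix for connected graphs. -/
lemma redInc_inj (G : DGraph n m) (hG : G.Conn) (v : Fin n → ℝ)
    (hv : G.redInc *ᵥ v = 0) : v = 0 := by
  set w : Fin (n+1) → ℝ := Fin.snoc v 0 with hw
  have key : ∀ e, w (G.head e) = w (G.tail e) := by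
    intro e
    have := congrFun hv e
    rw [redInc_mulVec G v e] at this
    simpa [sub_eq_zero] using this
  have adj : ∀ i j, (G.adjGraph Set.univ).Adj i j → w i = w j := by
    intro i j hij
    rw [DGraph.adjGraph, SimpleGraph.fromRel_adj] at hij
    rcases hij.2 with ⟨e, _, he1, he2⟩ | ⟨e, _, he1, he2⟩
    · rw [← he1, ← he2]; exact key e
    · rw [← he1, ← he2]; exact (key e).symm
  have reach : ∀ i j, (G.adjGraph Set.univ).Reachable i j → w i = w j := by
    intro i j hij
    obtain ⟨p⟩ := hij
    induction p with
    | nil => rfl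
    | cons h p ih => exact (adj _ _ h).trans ih
  have hconst : ∀ i, w i = 0 := by
    intro i
    have := reach i (Fin.last n) (hG.preconnected i (Fin.last n))
    rw [this, hw]
    simp
  funext i
  have := hconst i.castSucc
  rw [hw] at this
  simpa using this

lemma lap_posDef (G : DGraph n m) (hG : G.Conn) (t : Fin m → ℝ) (ht : ∀ e, 0 < t e) :
    ((G.redInc)ᵀ * Matrix.diagonal t * G.redInc).PosDef := by
  rw [Matrix.posDef_iff_dotProduct_mulVec]
  constructor
  · have := Matrix.isHermitian_conjTranspose_mul_mul (A := Matrix.diagonal t) G.redInc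
      (Matrix.isHermitian_diagonal_of_self_adjoint t (funext fun i => rfl))
    simpa using this
  · intro x hx
    have hx' : G.redInc *ᵥ x ≠ 0 := fun h => hx (redInc_inj G hG x h)
    rw [show (star x) = x from rfl, quadform_expand]
    obtain ⟨e₀, he₀⟩ : ∃ e, (G.redInc *ᵥ x) e ≠ 0 := by
      by_contra h
      push_neg at h
      exact hx' (funext h)
    apply Finset.sum_pos' (fun e _ => mul_nonneg (ht e).le (mul_self_nonneg _))
    exact ⟨e₀, Finset.mem_univ _, mul_pos (ht e₀) (mul_self_pos.2 he₀)⟩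


end Aux

/-- For a connected directed graph without self-loops with reduced incidence matrix `ρ̂`,
there is a constant `c_Γ > 0` (depending only on `Γ`) such that for every vector `t̃` of
positive reals, `A(t̃) = ρ̂ᵀ diag(t̃) ρ̂` is invertible and, in the Loewner order,
`A(t̃)⁻¹ (ρ̂ᵀ diag(t̃²) ρ̂) A(t̃)⁻¹ ≥ (1/c_Γ) · Id`. -/
theorem loewner_lower_bound_for_schwinger_matrix {n m : ℕ} (hn : 1 ≤ n)
    (G : DGraph n m) (hG : G.Conn) :
    ∃ c : ℝ, 0 < c ∧
      ∀ t : Fin m → ℝ, (∀ e, 0 < t e) →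
        IsUnit ((G.redInc)ᵀ * Matrix.diagonal t * G.redInc) ∧
        ∀ x : Fin n → ℝ,
          (1 / c) * ∑ i, x i ^ 2 ≤
            x ⬝ᵥ (((((G.redInc)ᵀ * Matrix.diagonal t * G.redInc)⁻¹) *
                ((G.redInc)ᵀ * Matrix.diagonal (fun e => t e ^ 2) * G.redInc) *
                (((G.redInc)ᵀ * Matrix.diagonal t * G.redInc)⁻¹)) *ᵥ x) := by
  classical
  refine ⟨(n : ℝ) * m + 1, by positivity, fun t ht => ?_⟩
  have hApd := lap_posDef G hG t ht
  have hAu : IsUnit ((G.redInc)ᵀ * Matrix.diagonal t * G.redInc) := hApd.isUnit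
  refine ⟨hAu, fun x => ?_⟩
  set ρ := G.redInc with hρ
  set A := ρᵀ * Matrix.diagonal t * ρ with hA
  set B := ρᵀ * Matrix.diagonal (fun e => t e ^ 2) * ρ with hB
  set y := A⁻¹ *ᵥ x with hy
  set u := ρ *ᵥ y with hu
  set S := ∑ e, (t e * u e) ^ 2 with hS
  have hS0 : 0 ≤ S := Finset.sum_nonneg fun e _ => sq_nonneg _
  have hdet : IsUnit A.det := A.isUnit_iff_isUnit_det.mp hAu
  have hxy : x = A *ᵥ y := by
    rw [hy, Matrix.mulVec_mulVec, Matrix.mul_nonsing_inv _ hdet, Matrix.one_mulVec]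
  have hsymm : A⁻¹ᵀ = A⁻¹ := by
    rw [Matrix.transpose_nonsing_inv]
    congr 1
    rw [← Matrix.conjTranspose_eq_transpose_of_trivial]
    exact hApd.1
  have hrhs : x ⬝ᵥ ((A⁻¹ * B * A⁻¹) *ᵥ x) = S := by
    rw [← Matrix.mulVec_mulVec, ← Matrix.mulVec_mulVec, Matrix.dotProduct_mulVec]
    have h1 : x ᵥ* A⁻¹ = y := by rw [← hsymm, Matrix.vecMul_transpose, ← hy]
    rw [h1, hB, quadform_expand, hS]
    exact Finset.sum_congr rfl fun e _ => by rw [← hu]; ring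
  have hxi : ∀ i, x i = ∑ e, ρ e i * (t e * u e) := by
    intro i
    have key : A *ᵥ y = ρᵀ *ᵥ fun e => t e * u e := by
      have hd : (Matrix.diagonal t *ᵥ u) = fun e => t e * u e :=
        funext fun e => Matrix.mulVec_diagonal t u e
      rw [hA, Matrix.mul_assoc, ← Matrix.mulVec_mulVec, ← Matrix.mulVec_mulVec, ← hu, hd]
    conv_lhs => rw [hxy]
    rw [key]
    simp [Matrix.mulVec, dotProduct, Matrix.transpose_apply]
  have hρ_sq : ∀ e i, (ρ e i) ^ 2 ≤ (1 : ℝ) := by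
    intro e i
    rw [hρ]
    unfold DGraph.redInc DGraph.inc
    by_cases h1 : G.head e = i.castSucc
    · simp [h1]
    · by_cases h2 : G.tail e = i.castSucc <;> simp [h1, h2]
  have hle : ∀ i, x i ^ 2 ≤ (m : ℝ) * S := by
    intro i
    rw [hxi i]
    calc (∑ e, ρ e i * (t e * u e)) ^ 2
        ≤ (∑ e, (ρ e i) ^ 2) * ∑ e, (t e * u e) ^ 2 :=
          Finset.sum_mul_sq_le_sq_mul_sq _ _ _
      _ ≤ (m : ℝ) * S := by
          apply mul_le_mul_of_nonneg_right _ hS0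
          calc ∑ e, (ρ e i) ^ 2 ≤ ∑ _e : Fin m, (1 : ℝ) :=
                Finset.sum_le_sum fun e _ => hρ_sq e i
            _ = (m : ℝ) := by simp
  have hsum : ∑ i, x i ^ 2 ≤ ((n : ℝ) * m + 1) * S := by
    calc ∑ i, x i ^ 2 ≤ ∑ _i : Fin n, (m : ℝ) * S :=
          Finset.sum_le_sum fun i _ => hle i
      _ = (n : ℝ) * ((m : ℝ) * S) := by simp
      _ ≤ ((n : ℝ) * m + 1) * S := by nlinarith
  rw [hrhs]
  rw [div_mul_eq_mul_div, one_mul, div_le_iff₀ (by positivity)]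
  linarith [hsum, mul_comm S ((n : ℝ) * m + 1)]
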